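/- Let φ : [a,b] → ℝ be C² with |φ′(t)| ≥ λ > 0 for all t ∈ [a,b] and φ′ monotone on [a,b], and let η : [a,b] → ℂ satisfy |η(t)| ≤ 1 and |η′(t)| ≤ M. Then |∫ₐᵇ η(t) e^{iμφ(t)} dt| ≤ C(1 + M(b−a))/(μλ) for all μ > 0, where C is an absolute constant. -/

import Mathlib

open Real Complex intervalIntegral Set

open MeasureTheory

private lemma vdc_le_on_Icc {a b c : ℝ} {f : ℝ → ℝ} (hab : a < b)
    (hf : ContinuousOn f (Set.Icc a b)) (h : ∀ t ∈ Set.Ioo a b, f t ≤ c) :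
    ∀ t ∈ Set.Icc a b, f t ≤ c := by
  intro t ht
  have ht' : t ∈ closure (Set.Ioo a b) := by rwa [closure_Ioo hab.ne]
  have hne : (nhdsWithin t (Set.Ioo a b)).NeBot := mem_closure_iff_nhdsWithin_neBot.1 ht'
  have hct : ContinuousWithinAt f (Set.Ioo a b) t := (hf t ht).mono Set.Ioo_subset_Icc_self
  exact le_of_tendsto hct (eventually_nhdsWithin_of_forall h)

private lemma vdc_deriv_nonneg {f : ℝ → ℝ} {a b x d : ℝ} (hx : x ∈ Set.Ioo a b)
    (hmono : MonotoneOn f (Set.Ioo a b)) (hd : HasDerivAt f d x) : 0 ≤ d := by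
  have h := hasDerivAt_iff_tendsto_slope.1 hd
  refine ge_of_tendsto h ?_
  have hmem : Set.Ioo a b ∈ nhdsWithin x {x}ᶜ :=
    nhdsWithin_le_nhds (isOpen_Ioo.mem_nhds hx)
  filter_upwards [hmem, self_mem_nhdsWithin] with y hy hyx
  have hyx' : y ≠ x := hyx
  rw [slope_def_field]
  rcases lt_or_gt_of_ne hyx' with h1 | h1
  · exact div_nonneg_of_nonpos (sub_nonpos.2 (hmono hy hx h1.le)) (sub_nonpos.2 h1.le)
  · exact div_nonneg (sub_nonneg.2 (hmono hx hy h1.le)) (sub_nonneg.2 h1.le)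

private lemma vdc_noamp {a b lam μ : ℝ} {φ : ℝ → ℝ} (hab : a < b) (hlam : 0 < lam) (hμ : 0 < μ)
    (hφ : ContDiffOn ℝ 2 φ (Set.Icc a b))
    (hφ' : ∀ t ∈ Set.Icc a b, lam ≤ |deriv φ t|)
    (hmono : MonotoneOn (deriv φ) (Set.Icc a b) ∨ AntitoneOn (deriv φ) (Set.Icc a b)) :
    ∀ x ∈ Set.Icc a b,
      ‖∫ t in a..x, Complex.exp (Complex.I * ((μ * φ t : ℝ) : ℂ))‖ ≤ 4 / (μ * lam) := by
  intro x hx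
  have hUD : UniqueDiffOn ℝ (Set.Icc a b) := uniqueDiffOn_Icc hab
  set ψ : ℝ → ℝ := derivWithin φ (Set.Icc a b) with hψdef
  set σ : ℝ → ℝ := derivWithin ψ (Set.Icc a b) with hσdef
  have hψ1 : ContDiffOn ℝ 1 ψ (Set.Icc a b) := hφ.derivWithin hUD (by norm_num)
  have hψc : ContinuousOn ψ (Set.Icc a b) := hψ1.continuousOn
  have hσc : ContinuousOn σ (Set.Icc a b) := (hψ1.derivWithin (m := 0) hUD (by norm_num)).continuousOn
  have hmem_nhds : ∀ t ∈ Set.Ioo a b, Set.Icc a b ∈ nhds t := fun t ht =>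
    Icc_mem_nhds ht.1 ht.2
  have hψeq : ∀ t ∈ Set.Ioo a b, ψ t = deriv φ t := fun t ht =>
    derivWithin_of_mem_nhds (hmem_nhds t ht)
  have hφd : ∀ t ∈ Set.Ioo a b, HasDerivAt φ (ψ t) t := by
    intro t ht
    have hdt : DifferentiableAt ℝ φ t :=
      (hφ.differentiableOn (by norm_num)).differentiableAt (hmem_nhds t ht)
    have h2 := hdt.hasDerivAt
    rwa [← hψeq t ht] at h2
  have hσd : ∀ t ∈ Set.Ioo a b, HasDerivAt ψ (σ t) t := by
    intro t ht
    have hdt : DifferentiableAt ℝ ψ t :=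
      (hψ1.differentiableOn (by norm_num)).differentiableAt (hmem_nhds t ht)
    have h2 := hdt.hasDerivAt
    rwa [show deriv ψ t = σ t from (derivWithin_of_mem_nhds (hmem_nhds t ht)).symm] at h2
  have hψlam : ∀ t ∈ Set.Icc a b, lam ≤ |ψ t| := by
    have h1 : ∀ t ∈ Set.Icc a b, -|ψ t| ≤ -lam := by
      refine vdc_le_on_Icc hab hψc.abs.neg fun t ht => ?_
      have := hφ' t (Set.Ioo_subset_Icc_self ht)
      rw [hψeq t ht]; linarith
    intro t ht; linarith [h1 t ht]
  have hψne : ∀ t ∈ Set.Icc a b, ψ t ≠ 0 := by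
    intro t ht h0
    have := hψlam t ht
    rw [h0, abs_zero] at this
    linarith
  obtain ⟨ε, hε, hσsign⟩ : ∃ ε : ℝ, (ε = 1 ∨ ε = -1) ∧ ∀ t ∈ Set.Ioo a b, 0 ≤ ε * σ t := by
    rcases hmono with hm | hm
    · refine ⟨1, Or.inl rfl, fun t ht => ?_⟩
      have hmono' : MonotoneOn ψ (Set.Ioo a b) := fun u hu v hv huv => by
        rw [hψeq u hu, hψeq v hv]
        exact hm (Set.Ioo_subset_Icc_self hu) (Set.Ioo_subset_Icc_self hv) huv
      simpa using vdc_deriv_nonneg ht hmono' (hσd t ht)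
    · refine ⟨-1, Or.inr rfl, fun t ht => ?_⟩
      have hmono' : MonotoneOn (fun u => -ψ u) (Set.Ioo a b) := fun u hu v hv huv => by
        simp only [neg_le_neg_iff]
        rw [hψeq u hu, hψeq v hv]
        exact hm (Set.Ioo_subset_Icc_self hu) (Set.Ioo_subset_Icc_self hv) huv
      have := vdc_deriv_nonneg ht hmono' (hσd t ht).neg
      linarith
  have hεabs : |ε| = 1 := by rcases hε with h | h <;> simp [h]
  -- abbreviations
  set e : ℝ → ℂ := fun t => Complex.exp (Complex.I * ((μ * φ t : ℝ) : ℂ)) with hedef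
  set c : ℝ → ℂ := fun t => Complex.I * ((μ * ψ t : ℝ) : ℂ) with hcdef
  set u : ℝ → ℂ := fun t => (c t)⁻¹ with hudef
  set uder : ℝ → ℂ := fun t => -(Complex.I * ((μ * σ t : ℝ) : ℂ)) / (c t) ^ 2 with huderdef
  set q : ℝ → ℝ := fun t => -ε * (μ * ψ t)⁻¹ with hqdef
  set qder : ℝ → ℝ := fun t => -ε * (-(μ * σ t) / (μ * ψ t) ^ 2) with hqderdef
  have hμψne : ∀ t ∈ Set.Icc a b, μ * ψ t ≠ 0 := fun t ht =>
    mul_ne_zero hμ.ne' (hψne t ht)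
  have hcne : ∀ t ∈ Set.Icc a b, c t ≠ 0 := fun t ht =>
    mul_ne_zero Complex.I_ne_zero (Complex.ofReal_ne_zero.2 (hμψne t ht))
  -- norms
  have henorm : ∀ t, ‖e t‖ = 1 := fun t => by
    simp [hedef, Complex.norm_exp]
  have hcnorm : ∀ t, ‖c t‖ = μ * |ψ t| := fun t => by
    simp [hcdef, map_mul, Complex.norm_I, Complex.norm_real, abs_mul,
      abs_of_pos hμ]
  have hmulam : 0 < μ * lam := mul_pos hμ hlam
  have hubd : ∀ t ∈ Set.Icc a b, ‖u t‖ ≤ (μ * lam)⁻¹ := by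
    intro t ht
    rw [hudef]
    simp only [norm_inv, hcnorm]
    have h1 : μ * lam ≤ μ * |ψ t| := mul_le_mul_of_nonneg_left (hψlam t ht) hμ.le
    exact inv_anti₀ hmulam h1
  -- continuity
  have hφcont : ContinuousOn φ (Set.Icc a b) := hφ.continuousOn
  have hecont : ContinuousOn e (Set.Icc a b) := by
    apply Complex.continuous_exp.comp_continuousOn
    exact continuousOn_const.mul (Complex.continuous_ofReal.comp_continuousOn
      (continuousOn_const.mul hφcont))
  have hccont : ContinuousOn c (Set.Icc a b) :=
    continuousOn_const.mul (Complex.continuous_ofReal.comp_continuousOn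
      (continuousOn_const.mul hψc))
  have hucont : ContinuousOn u (Set.Icc a b) := hccont.inv₀ hcne
  have hudercont : ContinuousOn uder (Set.Icc a b) := by
    apply ContinuousOn.div
    · exact (continuousOn_const.mul (Complex.continuous_ofReal.comp_continuousOn
        (continuousOn_const.mul hσc))).neg
    · exact hccont.pow 2
    · exact fun t ht => pow_ne_zero 2 (hcne t ht)
  have hqcont : ContinuousOn q (Set.Icc a b) :=
    continuousOn_const.mul ((continuousOn_const.mul hψc).inv₀ hμψne)
  have hqdercont : ContinuousOn qder (Set.Icc a b) := by
    apply continuousOn_const.mul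
    apply ContinuousOn.div
    · exact (continuousOn_const.mul hσc).neg
    · exact (continuousOn_const.mul hψc).pow 2
    · exact fun t ht => pow_ne_zero 2 (hμψne t ht)
  -- derivatives on the interior
  have heder : ∀ t ∈ Set.Ioo a b, HasDerivAt e (e t * c t) t := by
    intro t ht
    have h1 : HasDerivAt (fun y => μ * φ y) (μ * ψ t) t := (hφd t ht).const_mul μ
    have h2 := (h1.ofReal_comp.const_mul Complex.I).cexp
    exact h2
  have hcder : ∀ t ∈ Set.Ioo a b, HasDerivAt c (Complex.I * ((μ * σ t : ℝ) : ℂ)) t := by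
    intro t ht
    exact (((hσd t ht).const_mul μ).ofReal_comp).const_mul Complex.I
  have huderiv : ∀ t ∈ Set.Ioo a b, HasDerivAt u (uder t) t := by
    intro t ht
    have hc0 := hcne t (Set.Ioo_subset_Icc_self ht)
    have h := HasDerivAt.comp (𝕜 := ℝ) t (hasDerivAt_inv hc0) (hcder t ht)
    have heq : -(c t ^ 2)⁻¹ * (Complex.I * ((μ * σ t : ℝ) : ℂ)) = uder t := by
      rw [huderdef]
      field_simp
    rw [heq] at h
    exact h
  have hqderiv : ∀ t ∈ Set.Ioo a b, HasDerivAt q (qder t) t := by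
    intro t ht
    have h1 : HasDerivAt (fun y => μ * ψ y) (μ * σ t) t := (hσd t ht).const_mul μ
    exact (h1.inv (hμψne t (Set.Ioo_subset_Icc_self ht))).const_mul (-ε)
  have hwder : ∀ t ∈ Set.Ioo a b, HasDerivAt (fun y => u y * e y) (uder t * e t + e t) t := by
    intro t ht
    have h1 := (huderiv t ht).mul (heder t ht)
    have h2 : u t * (e t * c t) = e t := by
      have hc0 := hcne t (Set.Ioo_subset_Icc_self ht)
      rw [hudef]
      field_simp
    rwa [h2] at h1
  -- restrict to [a, x]
  have hax : a ≤ x := hx.1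
  have hsubI : Set.Icc a x ⊆ Set.Icc a b := Set.Icc_subset_Icc_right hx.2
  have hsubO : Set.Ioo a x ⊆ Set.Ioo a b := Set.Ioo_subset_Ioo_right hx.2
  have hintuder : IntervalIntegrable (fun t => uder t * e t) volume a x := by
    apply ContinuousOn.intervalIntegrable
    rw [Set.uIcc_of_le hax]
    exact (hudercont.mono hsubI).mul (hecont.mono hsubI)
  have hinte : IntervalIntegrable e volume a x := by
    apply ContinuousOn.intervalIntegrable
    rw [Set.uIcc_of_le hax]
    exact hecont.mono hsubI
  have hIBP : ∫ t in a..x, (uder t * e t + e t) = u x * e x - u a * e a := by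
    apply intervalIntegral.integral_eq_sub_of_hasDeriv_right_of_le hax
    · exact (hucont.mono hsubI).mul (hecont.mono hsubI)
    · intro t ht
      exact (hwder t (hsubO ht)).hasDerivWithinAt
    · exact hintuder.add hinte
  have hsplit : (∫ t in a..x, (uder t * e t + e t))
      = (∫ t in a..x, uder t * e t) + ∫ t in a..x, e t :=
    intervalIntegral.integral_add hintuder hinte
  have heint : ∫ t in a..x, e t = u x * e x - u a * e a - ∫ t in a..x, uder t * e t := by
    rw [← hIBP, hsplit]; ring
  -- FTC for q
  have hqFTC : ∫ t in a..x, qder t = q x - q a := by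
    apply intervalIntegral.integral_eq_sub_of_hasDeriv_right_of_le hax
    · exact hqcont.mono hsubI
    · intro t ht
      exact (hqderiv t (hsubO ht)).hasDerivWithinAt
    · apply ContinuousOn.intervalIntegrable
      rw [Set.uIcc_of_le hax]
      exact hqdercont.mono hsubI
  -- pointwise identification of the norm of the integrand
  have hnormeq : ∀ t ∈ Set.Ioo a x, ‖uder t * e t‖ = qder t := by
    intro t ht
    have htb := hsubO ht
    have hts : t ∈ Set.Icc a b := Set.Ioo_subset_Icc_self htb
    have h1 : ‖uder t * e t‖ = |μ * σ t| / (μ * ψ t) ^ 2 := by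
      rw [norm_mul, henorm, mul_one, huderdef]
      rw [norm_div, norm_neg, norm_mul, norm_pow]
      simp only [Complex.norm_I, Complex.norm_real, Real.norm_eq_abs, one_mul]
      rw [show ‖c t‖ = μ * |ψ t| from hcnorm t]
      rw [mul_pow, _root_.sq_abs, ← mul_pow]
    rw [h1, hqderdef]
    have h2 : |μ * σ t| = ε * (μ * σ t) := by
      have hsg := hσsign t htb
      rcases hε with h | h <;> subst h
      · rw [one_mul] at hsg ⊢
        rw [_root_.abs_of_nonneg (by positivity)]
      · rw [_root_.abs_of_nonpos (by nlinarith)]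
        ring
    rw [h2]
    ring
  -- bound the error integral
  have hqbd : ∀ t ∈ Set.Icc a b, |q t| ≤ (μ * lam)⁻¹ := by
    intro t ht
    rw [hqdef]
    rw [abs_mul, abs_neg, hεabs, one_mul, abs_inv, abs_mul, abs_of_pos hμ]
    exact inv_anti₀ hmulam (mul_le_mul_of_nonneg_left (hψlam t ht) hμ.le)
  have hInorm : ‖∫ t in a..x, uder t * e t‖ ≤ (μ * lam)⁻¹ + (μ * lam)⁻¹ := by
    have hb1 : ‖∫ t in a..x, uder t * e t‖ ≤ ∫ t in a..x, ‖uder t * e t‖ :=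
      intervalIntegral.norm_integral_le_integral_norm hax
    have hb2 : (∫ t in a..x, ‖uder t * e t‖) = ∫ t in a..x, qder t := by
      apply intervalIntegral.integral_congr_ae
      rw [Set.uIoc_of_le hax]
      have hxne : ∀ᵐ t : ℝ, t ≠ x := by
        rw [MeasureTheory.ae_iff]
        simp only [not_not, Set.setOf_eq_eq_singleton]
        exact measure_singleton x
      filter_upwards [hxne] with t htx hmem
      exact hnormeq t ⟨hmem.1, lt_of_le_of_ne hmem.2 htx⟩
    have hb3 : q x - q a ≤ (μ * lam)⁻¹ + (μ * lam)⁻¹ := by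
      have h4 := hqbd x hx
      have h5 := hqbd a (Set.left_mem_Icc.2 hab.le)
      have h6 := abs_le.1 h4
      have h7 := abs_le.1 h5
      linarith [h6.1, h6.2, h7.1, h7.2]
    calc ‖∫ t in a..x, uder t * e t‖ ≤ ∫ t in a..x, ‖uder t * e t‖ := hb1
      _ = ∫ t in a..x, qder t := hb2
      _ = q x - q a := hqFTC
      _ ≤ (μ * lam)⁻¹ + (μ * lam)⁻¹ := hb3
  -- final estimate
  have hfinal : ‖∫ t in a..x, e t‖ ≤ 4 * (μ * lam)⁻¹ := by
    rw [heint]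
    have hb1 : ‖u x * e x‖ ≤ (μ * lam)⁻¹ := by
      rw [norm_mul, henorm, mul_one]; exact hubd x hx
    have hb2 : ‖u a * e a‖ ≤ (μ * lam)⁻¹ := by
      rw [norm_mul, henorm, mul_one]; exact hubd a (Set.left_mem_Icc.2 hab.le)
    calc ‖u x * e x - u a * e a - ∫ t in a..x, uder t * e t‖
        ≤ ‖u x * e x - u a * e a‖ + ‖∫ t in a..x, uder t * e t‖ := norm_sub_le _ _
      _ ≤ (‖u x * e x‖ + ‖u a * e a‖) + ‖∫ t in a..x, uder t * e t‖ := by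
          have := norm_sub_le (u x * e x) (u a * e a)
          linarith
      _ ≤ ((μ * lam)⁻¹ + (μ * lam)⁻¹) + ((μ * lam)⁻¹ + (μ * lam)⁻¹) := by
          linarith [hInorm]
      _ = 4 * (μ * lam)⁻¹ := by ring
  calc ‖∫ t in a..x, Complex.exp (Complex.I * ((μ * φ t : ℝ) : ℂ))‖
      = ‖∫ t in a..x, e t‖ := by rw [hedef]
    _ ≤ 4 * (μ * lam)⁻¹ := hfinal
    _ = 4 / (μ * lam) := by rw [div_eq_mul_inv]

/-- (First-derivative van der Corput lemma with amplitude.)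
If `φ : [a,b] → ℝ` is `C²` with `|φ′| ≥ λ > 0` and `φ′` monotone on `[a,b]`, and
`η : [a,b] → ℂ` satisfies `|η| ≤ 1`, `|η′| ≤ M`, then
`|∫ₐᵇ η(t) e^{iμφ(t)} dt| ≤ C (1 + M(b−a)) / (μλ)` for all `μ > 0`,
with `C` an absolute constant. -/
theorem vanDerCorput_first_order :
    ∃ C : ℝ, 0 < C ∧
      ∀ (a b lam M : ℝ) (φ : ℝ → ℝ) (η : ℝ → ℂ),
        a < b → 0 < lam → 0 ≤ M →
        ContDiffOn ℝ 2 φ (Set.Icc a b) →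
        (∀ t ∈ Set.Icc a b, lam ≤ |deriv φ t|) →
        (MonotoneOn (deriv φ) (Set.Icc a b) ∨ AntitoneOn (deriv φ) (Set.Icc a b)) →
        ContDiffOn ℝ 1 η (Set.Icc a b) →
        (∀ t ∈ Set.Icc a b, ‖η t‖ ≤ 1) →
        (∀ t ∈ Set.Icc a b, ‖deriv η t‖ ≤ M) →
        ∀ μ : ℝ, 0 < μ →
          ‖∫ t in a..b, η t * Complex.exp (Complex.I * (μ * φ t))‖
            ≤ C * (1 + M * (b - a)) / (μ * lam) := by
  refine ⟨4, by norm_num, ?_⟩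
  intro a b lam M φ η hab hlam hM hφ hφ' hmono hη hη1 hηM μ hμ
  have hUD : UniqueDiffOn ℝ (Set.Icc a b) := uniqueDiffOn_Icc hab
  have hmulam : 0 < μ * lam := mul_pos hμ hlam
  set e : ℝ → ℂ := fun t => Complex.exp (Complex.I * ((μ * φ t : ℝ) : ℂ)) with hedef
  have hrw : (∫ t in a..b, η t * Complex.exp (Complex.I * (μ * φ t)))
      = ∫ t in a..b, η t * e t := by
    apply intervalIntegral.integral_congr
    intro t ht
    rw [hedef]
    push_cast
    ring_nf
  have hmem_nhds : ∀ t ∈ Set.Ioo a b, Set.Icc a b ∈ nhds t := fun t ht =>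
    Icc_mem_nhds ht.1 ht.2
  have hφcont : ContinuousOn φ (Set.Icc a b) := hφ.continuousOn
  have hecont : ContinuousOn e (Set.Icc a b) := by
    apply Complex.continuous_exp.comp_continuousOn
    exact continuousOn_const.mul (Complex.continuous_ofReal.comp_continuousOn
      (continuousOn_const.mul hφcont))
  set F : ℝ → ℂ := fun y => ∫ t in a..y, e t with hFdef
  have hF4 : ∀ y ∈ Set.Icc a b, ‖F y‖ ≤ 4 / (μ * lam) :=
    vdc_noamp hab hlam hμ hφ hφ' hmono
  have hFcont : ContinuousOn F (Set.Icc a b) := by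
    have h1 : IntegrableOn e (Set.uIcc a b) volume := by
      rw [Set.uIcc_of_le hab.le]
      exact hecont.integrableOn_Icc
    have := continuousOn_primitive_interval h1
    rwa [Set.uIcc_of_le hab.le] at this
  have hFd : ∀ t ∈ Set.Ioo a b, HasDerivAt F (e t) t := by
    intro t ht
    apply intervalIntegral.integral_hasDerivAt_right
    · apply ContinuousOn.intervalIntegrable
      rw [Set.uIcc_of_le ht.1.le]
      exact hecont.mono (Set.Icc_subset_Icc_right ht.2.le)
    · exact ContinuousOn.stronglyMeasurableAtFilter isOpen_Ioo
        (hecont.mono Set.Ioo_subset_Icc_self) t ht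
    · exact (hecont t (Set.Ioo_subset_Icc_self ht)).continuousAt (hmem_nhds t ht)
  set η₁ : ℝ → ℂ := derivWithin η (Set.Icc a b) with hη₁def
  have hη₁c : ContinuousOn η₁ (Set.Icc a b) :=
    (hη.derivWithin (m := 0) hUD (by norm_num)).continuousOn
  have hηd : ∀ t ∈ Set.Ioo a b, HasDerivAt η (η₁ t) t := by
    intro t ht
    have hdt : DifferentiableAt ℝ η t :=
      (hη.differentiableOn (by norm_num)).differentiableAt (hmem_nhds t ht)
    have h2 := hdt.hasDerivAt
    rwa [show deriv η t = η₁ t from (derivWithin_of_mem_nhds (hmem_nhds t ht)).symm] at h2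
  have hη₁M : ∀ t ∈ Set.Icc a b, ‖η₁ t‖ ≤ M := by
    refine vdc_le_on_Icc hab hη₁c.norm fun t ht => ?_
    rw [hη₁def, derivWithin_of_mem_nhds (hmem_nhds t ht)]
    exact hηM t (Set.Ioo_subset_Icc_self ht)
  -- integration by parts
  have hηcont : ContinuousOn η (Set.Icc a b) := hη.continuousOn
  have hint1 : IntervalIntegrable (fun t => η₁ t * F t) volume a b := by
    apply ContinuousOn.intervalIntegrable
    rw [Set.uIcc_of_le hab.le]
    exact hη₁c.mul hFcont
  have hint2 : IntervalIntegrable (fun t => η t * e t) volume a b := by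
    apply ContinuousOn.intervalIntegrable
    rw [Set.uIcc_of_le hab.le]
    exact hηcont.mul hecont
  have hIBP : ∫ t in a..b, (η₁ t * F t + η t * e t) = η b * F b - η a * F a := by
    apply intervalIntegral.integral_eq_sub_of_hasDeriv_right_of_le hab.le
    · exact hηcont.mul hFcont
    · intro t ht
      exact ((hηd t ht).mul (hFd t ht)).hasDerivWithinAt
    · exact hint1.add hint2
  have hFa : F a = 0 := intervalIntegral.integral_same
  have hsplit : (∫ t in a..b, (η₁ t * F t + η t * e t))
      = (∫ t in a..b, η₁ t * F t) + ∫ t in a..b, η t * e t :=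
    intervalIntegral.integral_add hint1 hint2
  have heq : ∫ t in a..b, η t * e t = η b * F b - ∫ t in a..b, η₁ t * F t := by
    have := hIBP
    rw [hsplit, hFa, mul_zero, sub_zero] at this
    linear_combination this
  -- estimates
  have hbd1 : ‖η b * F b‖ ≤ 4 / (μ * lam) := by
    rw [norm_mul]
    calc ‖η b‖ * ‖F b‖ ≤ 1 * (4 / (μ * lam)) := by
          apply mul_le_mul (hη1 b (Set.right_mem_Icc.2 hab.le))
            (hF4 b (Set.right_mem_Icc.2 hab.le)) (norm_nonneg _) zero_le_one
      _ = 4 / (μ * lam) := one_mul _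
  have hbd2 : ‖∫ t in a..b, η₁ t * F t‖ ≤ M * (4 / (μ * lam)) * (b - a) := by
    have h1 : ∀ t ∈ Set.uIoc a b, ‖η₁ t * F t‖ ≤ M * (4 / (μ * lam)) := by
      intro t ht
      rw [Set.uIoc_of_le hab.le] at ht
      have hts : t ∈ Set.Icc a b := ⟨ht.1.le, ht.2⟩
      rw [norm_mul]
      exact mul_le_mul (hη₁M t hts) (hF4 t hts) (norm_nonneg _) hM
    have h2 := intervalIntegral.norm_integral_le_of_norm_le_const h1
    rwa [_root_.abs_of_nonneg (by linarith : (0:ℝ) ≤ b - a)] at h2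
  rw [hrw, heq]
  calc ‖η b * F b - ∫ t in a..b, η₁ t * F t‖
      ≤ ‖η b * F b‖ + ‖∫ t in a..b, η₁ t * F t‖ := norm_sub_le _ _
    _ ≤ 4 / (μ * lam) + M * (4 / (μ * lam)) * (b - a) := add_le_add hbd1 hbd2
    _ = 4 * (1 + M * (b - a)) / (μ * lam) := by
        field_simp
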